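/- Let X be a centered real random variable with |X| ≤ c almost surely and σ² = E[X²]. Then log E[e^X] - σ²/2 ≥ -(σ²/2)·ε₁(c), where ε₁(c) = (1 - θ(-c)) + (θ(-c)·c/2)², and θ(x) = 2(e^x - 1 - x)/x² for x ≠ 0, θ(0) = 1. -/

import Mathlib

open MeasureTheory ProbabilityTheory Real

/-- `θ(x) = 2(e^x - 1 - x)/x²` for `x ≠ 0`, `θ(0) = 1`. -/
noncomputable def thetaFn (x : ℝ) : ℝ :=
  if x = 0 then 1 else 2 * (Real.exp x - 1 - x) / x ^ 2


-- g(x) = x²/2 + x + 1 - e^x is antitone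
lemma g_antitone : Antitone (fun x : ℝ => x^2/2 + x + 1 - Real.exp x) := by
  apply antitone_of_hasDerivAt_nonpos (f' := fun x => x + 1 - Real.exp x)
  · intro x
    have h1 : HasDerivAt (fun x : ℝ => x^2/2 + x + 1) (x + 1) x := by
      have := ((hasDerivAt_pow 2 x).div_const 2).add ((hasDerivAt_id x).add_const 1)
      exact (this.congr_deriv (by ring)).congr_of_eventuallyEq (Filter.Eventually.of_forall fun y => by simp only [Pi.add_apply, id]; ring)
    exact (h1.sub (Real.hasDerivAt_exp x)).congr_of_eventuallyEq (Filter.Eventually.of_forall fun y => rfl)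
  · intro x
    have := Real.add_one_le_exp x
    simp only [Pi.zero_apply]
    linarith

-- quadratic bounds on exp
lemma quad_le_exp {x : ℝ} (hx : 0 ≤ x) : x^2/2 + x + 1 ≤ Real.exp x := by
  have := g_antitone hx
  simp at this; linarith

lemma exp_le_quad {x : ℝ} (hx : x ≤ 0) : Real.exp x ≤ x^2/2 + x + 1 := by
  have := g_antitone hx
  simp at this; linarith

-- h(x) = e^x(x-2)+x+2 is monotone, h 0 = 0
lemma h_monotone : Monotone (fun x : ℝ => Real.exp x * (x - 2) + x + 2) := by
  apply monotone_of_hasDerivAt_nonneg (f' := fun x => Real.exp x * (x - 1) + 1)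
  · intro x
    have h1 : HasDerivAt (fun x : ℝ => Real.exp x * (x - 2)) (Real.exp x * (x - 2) + Real.exp x * 1) x :=
      (Real.hasDerivAt_exp x).mul ((hasDerivAt_id x).sub_const 2)
    exact ((h1.add ((hasDerivAt_id x).add_const 2)).congr_deriv (by ring)).congr_of_eventuallyEq (Filter.Eventually.of_forall fun y => by simp only [Pi.add_apply, id]; ring)
  · intro x
    have h1 : 1 - x ≤ Real.exp (-x) := by have := Real.add_one_le_exp (-x); linarith
    have h2 : Real.exp x * (1 - x) ≤ Real.exp x * Real.exp (-x) :=
      mul_le_mul_of_nonneg_left h1 (Real.exp_pos x).le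
    rw [← Real.exp_add] at h2; simp at h2
    simp only [Pi.zero_apply]; nlinarith


lemma theta_pos (x : ℝ) : 0 < thetaFn x := by
  unfold thetaFn
  split
  · norm_num
  · next hx =>
    have h1 := Real.add_one_lt_exp hx
    have h2 : (0:ℝ) < x^2 := by positivity
    apply div_pos (by linarith) h2

lemma theta_le_one {x : ℝ} (hx : x ≤ 0) : thetaFn x ≤ 1 := by
  unfold thetaFn
  split
  · exact le_refl _
  · next hne =>
    have h2 : (0:ℝ) < x^2 := by positivity
    rw [div_le_one h2]
    have := exp_le_quad hx
    linarith

lemma one_le_theta {x : ℝ} (hx : 0 ≤ x) : 1 ≤ thetaFn x := by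
  unfold thetaFn
  split
  · exact le_refl _
  · next hne =>
    have h2 : (0:ℝ) < x^2 := by positivity
    rw [le_div_iff₀ h2]
    have := quad_le_exp hx
    linarith

lemma theta_hasDerivAt {x : ℝ} (hx : x ≠ 0) :
    HasDerivAt thetaFn ((2 * (Real.exp x - 1) * x^2 - 2 * (Real.exp x - 1 - x) * (2*x)) / (x^2)^2) x := by
  have hform : HasDerivAt (fun y : ℝ => 2 * (Real.exp y - 1 - y) / y ^ 2)
      ((2 * (Real.exp x - 1) * x^2 - 2 * (Real.exp x - 1 - x) * (2*x)) / (x^2)^2) x := by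
    have hnum : HasDerivAt (fun y : ℝ => 2 * (Real.exp y - 1 - y)) (2 * (Real.exp x - 1)) x := by
      have := ((Real.hasDerivAt_exp x).sub_const 1).sub (hasDerivAt_id x)
      simpa using (this.const_mul 2).congr_deriv (by ring)
    have hden : HasDerivAt (fun y : ℝ => y ^ 2) (2 * x) x := by
      simpa using hasDerivAt_pow 2 x
    exact (hnum.div hden (by positivity)).congr_deriv (by ring)
  apply hform.congr_of_eventuallyEq
  filter_upwards [eventually_ne_nhds hx] with y hy
  simp [thetaFn, hy]

lemma deriv_theta_nonneg {x : ℝ} (hx : x ≠ 0) :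
    0 ≤ (2 * (Real.exp x - 1) * x^2 - 2 * (Real.exp x - 1 - x) * (2*x)) / (x^2)^2 := by
  have hnum : 2 * (Real.exp x - 1) * x^2 - 2 * (Real.exp x - 1 - x) * (2*x)
      = 2 * x * (Real.exp x * (x - 2) + x + 2) := by ring
  rcases lt_or_gt_of_ne hx with h | h
  · have hh : Real.exp x * (x - 2) + x + 2 ≤ 0 := by
      have := h_monotone h.le; simpa using this
    rw [hnum]
    apply div_nonneg (by nlinarith) (by positivity)
  · have hh : 0 ≤ Real.exp x * (x - 2) + x + 2 := by
      have := h_monotone h.le; simpa using this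
    rw [hnum]
    apply div_nonneg (by nlinarith) (by positivity)

lemma theta_monotone : Monotone thetaFn := by
  have hIoi : MonotoneOn thetaFn (Set.Ioi (0:ℝ)) := by
    apply monotoneOn_of_hasDerivWithinAt_nonneg (convex_Ioi 0)
      (f' := fun x => (2 * (Real.exp x - 1) * x^2 - 2 * (Real.exp x - 1 - x) * (2*x)) / (x^2)^2)
    · intro x hx
      exact (theta_hasDerivAt (ne_of_gt hx)).continuousAt.continuousWithinAt
    · intro x hx
      rw [interior_Ioi] at hx
      exact (theta_hasDerivAt (ne_of_gt hx)).hasDerivWithinAt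
    · intro x hx
      rw [interior_Ioi] at hx
      exact deriv_theta_nonneg (ne_of_gt hx)
  have hIio : MonotoneOn thetaFn (Set.Iio (0:ℝ)) := by
    apply monotoneOn_of_hasDerivWithinAt_nonneg (convex_Iio 0)
      (f' := fun x => (2 * (Real.exp x - 1) * x^2 - 2 * (Real.exp x - 1 - x) * (2*x)) / (x^2)^2)
    · intro x hx
      exact (theta_hasDerivAt (ne_of_lt hx)).continuousAt.continuousWithinAt
    · intro x hx
      rw [interior_Iio] at hx
      exact (theta_hasDerivAt (ne_of_lt hx)).hasDerivWithinAt
    · intro x hx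
      rw [interior_Iio] at hx
      exact deriv_theta_nonneg (ne_of_lt hx)
  intro x y hxy
  rcases lt_or_ge 0 x with hx0 | hx0
  · exact hIoi hx0 (lt_of_lt_of_le hx0 hxy) hxy
  · rcases lt_or_ge y 0 with hy0 | hy0
    · exact hIio (lt_of_le_of_lt hxy hy0) hy0 hxy
    · exact le_trans (theta_le_one hx0) (one_le_theta hy0)


lemma exp_lower_bound {c y : ℝ} (hy : -c ≤ y) :
    1 + y + thetaFn (-c) * y ^ 2 / 2 ≤ Real.exp y := by
  rcases eq_or_ne y 0 with rfl | hne
  · simp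
  · have hmono := theta_monotone hy
    have hval : thetaFn y = 2 * (Real.exp y - 1 - y) / y ^ 2 := by simp [thetaFn, hne]
    have hy2 : (0:ℝ) < y ^ 2 := by positivity
    have heq : Real.exp y = 1 + y + thetaFn y * y ^ 2 / 2 := by
      rw [hval]; field_simp; ring
    rw [heq]
    have := mul_le_mul_of_nonneg_right hmono hy2.le
    linarith

lemma log_one_add_ge {u : ℝ} (hu : 0 ≤ u) : u - u ^ 2 / 2 ≤ Real.log (1 + u) := by
  have key : MonotoneOn (fun t : ℝ => Real.log (1 + t) - t + t ^ 2 / 2) (Set.Ici (0:ℝ)) := by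
    apply monotoneOn_of_hasDerivWithinAt_nonneg (convex_Ici 0)
      (f' := fun t => 1 / (1 + t) - 1 + t)
    · apply ContinuousOn.add (ContinuousOn.sub ?_ continuousOn_id)
        ((continuous_pow 2 |>.div_const 2).continuousOn)
      apply ContinuousOn.log ((continuous_const.add continuous_id).continuousOn)
      intro t ht
      simp only [Set.mem_Ici] at ht
      show (1:ℝ) + t ≠ 0; exact ne_of_gt (by linarith)
    · intro t ht
      rw [interior_Ici] at ht
      have h1t : (1 : ℝ) + t ≠ 0 := by simp only [Set.mem_Ioi] at ht; positivity
      have hlog : HasDerivAt (fun t : ℝ => Real.log (1 + t)) (1 / (1 + t)) t := by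
        have := (((hasDerivAt_id t).const_add 1).log h1t)
        simpa using this
      have := (hlog.sub (hasDerivAt_id t)).add ((hasDerivAt_pow 2 t).div_const 2)
      exact (this.congr_deriv (by ring)).hasDerivWithinAt
    · intro t ht
      rw [interior_Ici] at ht
      simp only [Set.mem_Ioi] at ht
      have : 1 / (1 + t) - 1 + t = t ^ 2 / (1 + t) := by field_simp; ring
      rw [this]; positivity
  have h0 := key Set.self_mem_Ici (Set.mem_Ici.mpr hu) hu
  simp at h0
  linarith


theorem bounded_centered_log_mgf_lower {Ω : Type*} [MeasureSpace Ω]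
    [IsProbabilityMeasure (ℙ : Measure Ω)]
    (X : Ω → ℝ) (hXmeas : Measurable X)
    (c : ℝ) (hbound : ∀ᵐ ω ∂ℙ, |X ω| ≤ c)
    (hcentered : ∫ ω, X ω ∂ℙ = 0) :
    -((∫ ω, X ω ^ 2 ∂ℙ) / 2) * ((1 - thetaFn (-c)) + (thetaFn (-c) * c / 2) ^ 2) ≤
      Real.log (∫ ω, Real.exp (X ω) ∂ℙ) - (∫ ω, X ω ^ 2 ∂ℙ) / 2 := by
  set θ := thetaFn (-c) with hθdef
  have hc0 : 0 ≤ c := by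
    obtain ⟨ω, hω⟩ := hbound.exists
    exact le_trans (abs_nonneg _) hω
  have hθpos : 0 < θ := theta_pos _
  have hθ1 : θ ≤ 1 := theta_le_one (by linarith)
  -- integrability
  have hIX : Integrable X ℙ := by
    apply Integrable.mono' (integrable_const c) hXmeas.aestronglyMeasurable
    filter_upwards [hbound] with ω hω
    simpa using hω
  have hIX2 : Integrable (fun ω => X ω ^ 2) ℙ := by
    apply Integrable.mono' (integrable_const (c ^ 2)) ((hXmeas.pow_const 2).aestronglyMeasurable)
    filter_upwards [hbound] with ω hω
    simp only [norm_pow, Real.norm_eq_abs]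
    exact pow_le_pow_left₀ (abs_nonneg _) hω 2
  have hIexp : Integrable (fun ω => Real.exp (X ω)) ℙ := by
    apply Integrable.mono' (integrable_const (Real.exp c))
      hXmeas.exp.aestronglyMeasurable
    filter_upwards [hbound] with ω hω
    rw [Real.norm_eq_abs, abs_of_pos (Real.exp_pos _)]
    exact Real.exp_le_exp.mpr (le_trans (le_abs_self _) hω)
  set σ2 := ∫ ω, X ω ^ 2 ∂ℙ with hσdef
  have hσ0 : 0 ≤ σ2 := integral_nonneg fun ω => sq_nonneg _
  have hσle : σ2 ≤ c ^ 2 := by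
    calc σ2 ≤ ∫ _ω, c ^ 2 ∂ℙ := by
          apply integral_mono_ae hIX2 (integrable_const _)
          filter_upwards [hbound] with ω hω
          calc X ω ^ 2 = |X ω| ^ 2 := (sq_abs _).symm
            _ ≤ c ^ 2 := by apply pow_le_pow_left₀ (abs_nonneg _) hω
      _ = c ^ 2 := by simp
  -- lower bound on MGF
  have hMGF : 1 + θ * σ2 / 2 ≤ ∫ ω, Real.exp (X ω) ∂ℙ := by
    have h1 : Integrable (fun ω => 1 + X ω) ℙ := by
      exact (integrable_const 1).add hIX
    have hint : Integrable (fun ω => 1 + X ω + θ * X ω ^ 2 / 2) ℙ := by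
      exact h1.add ((hIX2.const_mul θ).div_const 2)
    have hle : ∫ ω, (1 + X ω + θ * X ω ^ 2 / 2) ∂ℙ ≤ ∫ ω, Real.exp (X ω) ∂ℙ := by
      apply integral_mono_ae hint hIexp
      filter_upwards [hbound] with ω hω
      exact exp_lower_bound (neg_le_of_abs_le hω)
    have heq : ∫ ω, (1 + X ω + θ * X ω ^ 2 / 2) ∂ℙ = 1 + θ * σ2 / 2 := by
      rw [integral_add h1 ((hIX2.const_mul θ).div_const 2),
        integral_add (integrable_const 1) hIX, integral_div, integral_const_mul]
      simp [hcentered, hσdef]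
    linarith
  set u := θ * σ2 / 2 with hudef
  have hu0 : 0 ≤ u := by positivity
  have hlog : u - u ^ 2 / 2 ≤ Real.log (∫ ω, Real.exp (X ω) ∂ℙ) := by
    calc u - u ^ 2 / 2 ≤ Real.log (1 + u) := log_one_add_ge hu0
      _ ≤ Real.log (∫ ω, Real.exp (X ω) ∂ℙ) :=
        Real.log_le_log (by linarith) hMGF
  have hkey : θ ^ 2 * σ2 * σ2 ≤ θ ^ 2 * σ2 * c ^ 2 :=
    mul_le_mul_of_nonneg_left hσle (by positivity)
  nlinarith [hlog, sq_nonneg θ, hσ0]
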